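/- Let U = L_d⋯L_1 be a depth-d circuit on m qudits, let Y be a subset of the qudits, and let ρ = Tr_Y(U|0⟩⟨0|^{⊗m}U†). Let A and B be operators acting on disjoint sets of qudits, both disjoint from Y. If the lightcones K_U(A) and K_U(B) are disjoint (share no gate), then Tr((A ⊗ B)ρ) = Tr(Aρ)·Tr(Bρ), where A ⊗ B denotes the operator acting as A on supp(A), as B on supp(B), and as the identity elsewhere (and in Tr(Aρ), A is likewise extended by the identity). -/

import Mathlib

open scoped Classical ComplexOrder
open Matrix

noncomputable section
namespace QCircuit

/-- `M` acts nontrivially only on the qudits in `S` (it is `N ⊗ I` for some matrix `N`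
on the sites in `S`). -/
def ActsOn {ι : Type} [Fintype ι] [DecidableEq ι] (q : ℕ)
    (M : Matrix (ι → Fin q) (ι → Fin q) ℂ) (S : Finset ι) : Prop :=
  ∃ N : Matrix ({i : ι // i ∈ S} → Fin q) ({i : ι // i ∈ S} → Fin q) ℂ,
    ∀ x y : ι → Fin q,
      M x y =
        if ∀ i ∉ S, x i = y i then N (fun i => x i.1) (fun i => y i.1) else 0

/-- Partial trace over the qudits in `S`. -/
def ptrace {ι : Type} [Fintype ι] [DecidableEq ι] (q : ℕ) (S : Finset ι)
    (M : Matrix (ι → Fin q) (ι → Fin q) ℂ) :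
    Matrix ({i : ι // i ∉ S} → Fin q) ({i : ι // i ∉ S} → Fin q) ℂ :=
  fun x y => ∑ z : {i : ι // i ∈ S} → Fin q,
    M (fun i => if h : i ∈ S then z ⟨i, h⟩ else x ⟨i, h⟩)
      (fun i => if h : i ∈ S then z ⟨i, h⟩ else y ⟨i, h⟩)

/-- The rank-one outer product `|v⟩⟨v|`. -/
def outer {ι : Type} (v : ι → ℂ) : Matrix ι ι ℂ := fun x y => v x * star (v y)

/-- A density matrix: positive semidefinite with unit trace. -/
def IsDensityMatrix {ι : Type} [Fintype ι] (M : Matrix ι ι ℂ) : Prop :=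
  M.PosSemidef ∧ M.trace = 1

/-- A gate on `m` qudits of local dimension `q`: a unitary acting nontrivially on at
most two qudits. -/
structure Gate (q m : ℕ) where
  supp : Finset (Fin m)
  mat : Matrix (Fin m → Fin q) (Fin m → Fin q) ℂ
  card_le : supp.card ≤ 2
  unitary : mat ∈ Matrix.unitaryGroup (Fin m → Fin q) ℂ
  isLocal : ActsOn q mat supp

/-- A depth-`d` circuit on `m` qudits: `d` layers, each a list of gates with pairwise
disjoint supports. Layer `0` is applied first (it is `L_1` in the notation `U = L_d ⋯ L_1`). -/
structure Circuit (q m d : ℕ) where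
  layers : Fin d → List (Gate q m)
  disjoint : ∀ j, (layers j).Pairwise (fun g h => Disjoint g.supp h.supp)

/-- The unitary of one layer (product of its gates; order is irrelevant since supports
are disjoint). -/
def layerU {q m d : ℕ} (C : Circuit q m d) (j : Fin d) :
    Matrix (Fin m → Fin q) (Fin m → Fin q) ℂ :=
  ((C.layers j).map Gate.mat).prod

/-- The circuit unitary `U = L_d ⋯ L_1` (layer `d-1` applied last). -/
def circuitU {q m d : ℕ} (C : Circuit q m d) :
    Matrix (Fin m → Fin q) (Fin m → Fin q) ℂ :=
  ((List.ofFn fun j => layerU C j).reverse).prod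

/-- The layers of a circuit, as a function on `ℕ` (empty beyond depth `d`). -/
def layerGet {q m d : ℕ} (C : Circuit q m d) (j : ℕ) : List (Gate q m) :=
  if h : j < d then C.layers ⟨j, h⟩ else []

/-- The union of the supports of a list of gates. -/
def listSupp {q m : ℕ} (l : List (Gate q m)) : Finset (Fin m) :=
  l.foldr (fun g acc => g.supp ∪ acc) ∅

/-- `lcAux C S k` is `S` together with the supports of all lightcone gates (of the
operator supported on `S`) in the top `k` layers. -/
def lcAux {q m d : ℕ} (C : Circuit q m d) (S : Finset (Fin m)) : ℕ → Finset (Fin m)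
  | 0 => S
  | k + 1 => lcAux C S k ∪
      listSupp ((layerGet C (d - 1 - k)).filter
        (fun g => decide (¬ Disjoint g.supp (lcAux C S k))))

/-- The lightcone `K^{(j+1)}`: the gates of layer `j` (`0`-based) belonging to the
lightcone of an operator supported on `S`, defined from the top layer down. -/
def lightcone {q m d : ℕ} (C : Circuit q m d) (S : Finset (Fin m)) (j : ℕ) :
    List (Gate q m) :=
  (layerGet C j).filter (fun g => decide (¬ Disjoint g.supp (lcAux C S (d - 1 - j))))

/-- `ezSupp C S j` is the set of qudits in the supports of the gates of `E^{(j+1)}`,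
the effect zone at (`0`-based) layer `j`, defined from the bottom layer up. -/
def ezSupp {q m d : ℕ} (C : Circuit q m d) (S : Finset (Fin m)) : ℕ → Finset (Fin m)
  | 0 => listSupp (lightcone C S 0)
  | j + 1 => listSupp ((layerGet C (j + 1)).filter
      (fun g => decide (¬ Disjoint g.supp (ezSupp C S j))))

/-- The effect zone `E^{(j+1)}` at (`0`-based) layer `j`: `E^{(1)} = K^{(1)}`, and
`E^{(j)}` consists of the gates of layer `j` whose support meets `supp(E^{(j-1)})`. -/
def effectZone {q m d : ℕ} (C : Circuit q m d) (S : Finset (Fin m)) : ℕ → List (Gate q m)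
  | 0 => lightcone C S 0
  | j + 1 => (layerGet C (j + 1)).filter
      (fun g => decide (¬ Disjoint g.supp (ezSupp C S j)))

/-- The shadow of the effect zone: all qudits in the support of some effect-zone gate. -/
def shadow {q m d : ℕ} (C : Circuit q m d) (S : Finset (Fin m)) : Finset (Fin m) :=
  (Finset.range d).biUnion (fun j => ezSupp C S j)

/-- The all-zeroes product state `|0⟩⟨0|^{⊗m}`. -/
def zeroState (q m : ℕ) (hq : 0 < q) : Matrix (Fin m → Fin q) (Fin m → Fin q) ℂ :=
  outer (fun x => if x = (fun _ => ⟨0, hq⟩) then 1 else 0)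

/-- Compression of an operator on all `m` qudits (acting trivially on the qudits in `Y`)
to an operator on the qudits outside `Y`, obtained by fixing the `Y`-coordinates. -/
def compress {ι : Type} [Fintype ι] [DecidableEq ι] {q : ℕ} (hq : 0 < q) (Y : Finset ι)
    (A : Matrix (ι → Fin q) (ι → Fin q) ℂ) :
    Matrix ({i : ι // i ∉ Y} → Fin q) ({i : ι // i ∉ Y} → Fin q) ℂ :=
  fun x y =>
    A (fun i => if h : i ∈ Y then ⟨0, hq⟩ else x ⟨i, h⟩)
      (fun i => if h : i ∈ Y then ⟨0, hq⟩ else y ⟨i, h⟩)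


set_option linter.unusedSectionVars false

section Helpers

variable {ι : Type} [Fintype ι] [DecidableEq ι] {q : ℕ}

/-- Glue an assignment on `S` with one off `S`. -/
def glue (S : Finset ι) (a : {i : ι // i ∈ S} → Fin q) (b : {i : ι // i ∉ S} → Fin q) :
    ι → Fin q := fun i => if h : i ∈ S then a ⟨i, h⟩ else b ⟨i, h⟩

lemma glue_mem {S : Finset ι} {a : {i : ι // i ∈ S} → Fin q} {b} {i : ι} (h : i ∈ S) :
    glue S a b i = a ⟨i, h⟩ := dif_pos h

lemma glue_not_mem {S : Finset ι} {a : {i : ι // i ∈ S} → Fin q} {b} {i : ι} (h : i ∉ S) :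
    glue S a b i = b ⟨i, h⟩ := dif_neg h

def splitEquiv (q : ℕ) (S : Finset ι) :
    (ι → Fin q) ≃ (({i : ι // i ∈ S} → Fin q) × ({i : ι // i ∉ S} → Fin q)) where
  toFun z := (fun i => z i.1, fun i => z i.1)
  invFun p := glue S p.1 p.2
  left_inv z := by
    funext i
    by_cases h : i ∈ S
    · simp [glue, h]
    · simp [glue, h]
  right_inv p := by
    ext i
    · simp [glue, i.2]
    · simp [glue, i.2]

lemma sum_split (S : Finset ι) (f : (ι → Fin q) → ℂ) :
    ∑ z : ι → Fin q, f z
      = ∑ a : {i : ι // i ∈ S} → Fin q, ∑ b : {i : ι // i ∉ S} → Fin q, f (glue S a b) := by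
  rw [← Equiv.sum_comp (splitEquiv q S).symm f, Fintype.sum_prod_type]
  rfl

end Helpers
section ActsOnLemmas

variable {ι : Type} [Fintype ι] [DecidableEq ι] {q : ℕ}

lemma actsOn_one (S : Finset ι) : ActsOn q (1 : Matrix (ι → Fin q) (ι → Fin q) ℂ) S := by
  refine ⟨1, fun x y => ?_⟩
  by_cases h : ∀ i ∉ S, x i = y i
  · rw [if_pos h, Matrix.one_apply, Matrix.one_apply]
    by_cases hxy : (fun i : {i : ι // i ∈ S} => x i.1) = fun i => y i.1
    · rw [if_pos hxy, if_pos]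
      funext i
      by_cases hi : i ∈ S
      · exact congrFun hxy ⟨i, hi⟩
      · exact h i hi
    · rw [if_neg hxy, if_neg]
      intro he; exact hxy (by funext i; exact congrFun he i.1)
  · rw [if_neg h, Matrix.one_apply_ne]
    intro he; exact h (fun i _ => congrFun he i)

lemma ActsOn.mono {M : Matrix (ι → Fin q) (ι → Fin q) ℂ} {S T : Finset ι}
    (hM : ActsOn q M S) (hST : S ⊆ T) : ActsOn q M T := by
  obtain ⟨N, hN⟩ := hM
  refine ⟨fun a b => if ∀ i : {i : ι // i ∈ T}, i.1 ∉ S → a i = b i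
      then N (fun j => a ⟨j.1, hST j.2⟩) (fun j => b ⟨j.1, hST j.2⟩) else 0, fun x y => ?_⟩
  beta_reduce
  rw [hN]
  by_cases hT : ∀ i ∉ T, x i = y i
  · rw [if_pos hT]
    by_cases hS : ∀ i ∉ S, x i = y i
    · rw [if_pos hS, if_pos (show ∀ i : {i : ι // i ∈ T}, (i : ι) ∉ S → x i.1 = y i.1 from
        fun i hi => hS i.1 hi)]
    · rw [if_neg hS, if_neg]
      intro hc; apply hS; intro i hi
      by_cases hiT : i ∈ T
      · exact hc ⟨i, hiT⟩ hi
      · exact hT i hiT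
  · rw [if_neg hT, if_neg]
    intro hS; exact hT (fun i hi => hS i (fun h => hi (hST h)))

lemma ActsOn.conjTranspose {M : Matrix (ι → Fin q) (ι → Fin q) ℂ} {S : Finset ι}
    (hM : ActsOn q M S) : ActsOn q Mᴴ S := by
  obtain ⟨N, hN⟩ := hM
  refine ⟨Nᴴ, fun x y => ?_⟩
  rw [Matrix.conjTranspose_apply, hN]
  by_cases h : ∀ i ∉ S, x i = y i
  · rw [if_pos (fun i hi => (h i hi).symm), if_pos h]; rfl
  · rw [if_neg (fun hc => h (fun i hi => (hc i hi).symm)), if_neg h, star_zero]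

lemma ActsOn.mul {M N : Matrix (ι → Fin q) (ι → Fin q) ℂ} {S : Finset ι}
    (hM : ActsOn q M S) (hN : ActsOn q N S) : ActsOn q (M * N) S := by
  obtain ⟨P, hP⟩ := hM; obtain ⟨Q, hQ⟩ := hN
  refine ⟨P * Q, fun x y => ?_⟩
  rw [Matrix.mul_apply, sum_split S]
  by_cases h : ∀ i ∉ S, x i = y i
  · rw [if_pos h, Matrix.mul_apply]
    refine Finset.sum_congr rfl (fun a _ => ?_)
    rw [Fintype.sum_eq_single (fun i : {i : ι // i ∉ S} => x i.1)]
    · rw [hP, hQ, if_pos, if_pos]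
      · have e1 : (fun i : {i : ι // i ∈ S} => glue S a (fun j : {i : ι // i ∉ S} => x j.1) i.1)
            = a := by funext i; rw [glue_mem i.2]
        have e2 : (fun i : {i : ι // i ∉ S} => glue S a (fun j : {i : ι // i ∉ S} => x j.1) i.1)
            = fun i => x i.1 := by funext i; rw [glue_not_mem i.2]
        rw [e1]
      · intro i hi; rw [glue_not_mem hi]; exact h i hi
      · intro i hi; rw [glue_not_mem hi]
    · intro b hb
      rw [hP, if_neg, zero_mul]
      intro hc; apply hb; funext i
      exact ((glue_not_mem i.2).symm.trans (hc i.1 i.2).symm)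
  · rw [if_neg h]
    refine Finset.sum_eq_zero (fun a _ => Finset.sum_eq_zero (fun b _ => ?_))
    by_cases h1 : ∀ i ∉ S, x i = glue S a b i
    · by_cases h2 : ∀ i ∉ S, glue S a b i = y i
      · exact absurd (fun i hi => (h1 i hi).trans (h2 i hi)) h
      · rw [hQ, if_neg h2, mul_zero]
    · rw [hP, if_neg h1, zero_mul]

lemma mul_apply_of_disjoint {M N : Matrix (ι → Fin q) (ι → Fin q) ℂ} {S T : Finset ι}
    (hM : ActsOn q M S) (hN : ActsOn q N T) (hST : Disjoint S T) (x y : ι → Fin q) :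
    (M * N) x y = M x (fun i => if i ∈ S then y i else x i)
      * N (fun i => if i ∈ S then y i else x i) y := by
  obtain ⟨P, hP⟩ := hM; obtain ⟨Q, hQ⟩ := hN
  rw [Matrix.mul_apply]
  apply Fintype.sum_eq_single
  intro z hz
  by_cases h1 : ∀ i ∉ S, x i = z i
  · by_cases h2 : ∀ i ∉ T, z i = y i
    · exfalso; apply hz; funext i
      by_cases hiS : i ∈ S
      · rw [if_pos hiS]; exact h2 i (Finset.disjoint_left.mp hST hiS)
      · rw [if_neg hiS]; exact (h1 i hiS).symm
    · rw [hQ, if_neg h2, mul_zero]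
  · rw [hP, if_neg h1, zero_mul]

lemma commute_of_disjoint {M N : Matrix (ι → Fin q) (ι → Fin q) ℂ} {S T : Finset ι}
    (hM : ActsOn q M S) (hN : ActsOn q N T) (hST : Disjoint S T) : M * N = N * M := by
  obtain ⟨P, hP⟩ := hM; obtain ⟨Q, hQ⟩ := hN
  ext x y
  rw [mul_apply_of_disjoint ⟨P, hP⟩ ⟨Q, hQ⟩ hST, mul_apply_of_disjoint ⟨Q, hQ⟩ ⟨P, hP⟩ hST.symm]
  simp only [hP, hQ]
  have c1 : ∀ i ∉ S, x i = (if i ∈ S then y i else x i) := fun i hi => by rw [if_neg hi]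
  have c3 : ∀ i ∉ T, x i = (if i ∈ T then y i else x i) := fun i hi => by rw [if_neg hi]
  by_cases hC : ∀ i, i ∉ S → i ∉ T → x i = y i
  · have c2 : ∀ i ∉ T, (if i ∈ S then y i else x i) = y i := by
      intro i hi; by_cases hiS : i ∈ S
      · rw [if_pos hiS]
      · rw [if_neg hiS]; exact hC i hiS hi
    have c4 : ∀ i ∉ S, (if i ∈ T then y i else x i) = y i := by
      intro i hi; by_cases hiT : i ∈ T
      · rw [if_pos hiT]
      · rw [if_neg hiT]; exact hC i hi hiT
    rw [if_pos c1, if_pos c2, if_pos c3, if_pos c4]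
    have eS1 : (fun i : {i : ι // i ∈ S} => if (i : ι) ∈ S then y i.1 else x i.1)
        = fun i => y i.1 := by funext i; rw [if_pos i.2]
    have eS2 : (fun i : {i : ι // i ∈ S} => if (i : ι) ∈ T then y i.1 else x i.1)
        = fun i => x i.1 := by funext i; rw [if_neg (Finset.disjoint_left.mp hST i.2)]
    have eT1 : (fun i : {i : ι // i ∈ T} => if (i : ι) ∈ T then y i.1 else x i.1)
        = fun i => y i.1 := by funext i; rw [if_pos i.2]
    have eT2 : (fun i : {i : ι // i ∈ T} => if (i : ι) ∈ S then y i.1 else x i.1)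
        = fun i => x i.1 := by funext i; rw [if_neg (Finset.disjoint_right.mp hST i.2)]
    rw [eS1, eS2, eT1, eT2, mul_comm]
  · push_neg at hC
    obtain ⟨i, hiS, hiT, hxy⟩ := hC
    have n2 : ¬ ∀ j ∉ T, (if j ∈ S then y j else x j) = y j := by
      intro hc; have := hc i hiT; rw [if_neg hiS] at this; exact hxy this
    have n4 : ¬ ∀ j ∉ S, (if j ∈ T then y j else x j) = y j := by
      intro hc; have := hc i hiS; rw [if_neg hiT] at this; exact hxy this
    rw [if_neg n2, if_neg n4, mul_zero, mul_zero]

lemma mul_apply_diag_of_disjoint {M N : Matrix (ι → Fin q) (ι → Fin q) ℂ} {S T : Finset ι}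
    (hM : ActsOn q M S) (hN : ActsOn q N T) (hST : Disjoint S T) (v : ι → Fin q) :
    (M * N) v v = M v v * N v v := by
  rw [mul_apply_of_disjoint hM hN hST]
  have : (fun i => if i ∈ S then v i else v i) = v := by funext i; rw [ite_self]
  rw [this]

end ActsOnLemmas
section ListLemmas

variable {q m : ℕ}

lemma listSupp_nil : listSupp ([] : List (Gate q m)) = ∅ := rfl

lemma listSupp_cons (g : Gate q m) (l : List (Gate q m)) :
    listSupp (g :: l) = g.supp ∪ listSupp l := rfl

lemma mem_listSupp {l : List (Gate q m)} {i : Fin m} :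
    i ∈ listSupp l ↔ ∃ g ∈ l, i ∈ g.supp := by
  induction l with
  | nil => simp [listSupp_nil]
  | cons g l ih => simp [listSupp_cons, Finset.mem_union, ih]

lemma disjoint_listSupp {l : List (Gate q m)} {T : Finset (Fin m)}
    (h : ∀ g ∈ l, Disjoint g.supp T) : Disjoint (listSupp l) T := by
  rw [Finset.disjoint_left]
  intro i hi hT
  obtain ⟨g, hg, hig⟩ := mem_listSupp.mp hi
  exact Finset.disjoint_left.mp (h g hg) hig hT

lemma actsOn_listProd (l : List (Gate q m)) :
    ActsOn q ((l.map Gate.mat).prod) (listSupp l) := by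
  induction l with
  | nil =>
      rw [List.map_nil, List.prod_nil, listSupp_nil]
      exact actsOn_one _
  | cons g l ih =>
      rw [List.map_cons, List.prod_cons, listSupp_cons]
      exact (g.isLocal.mono Finset.subset_union_left).mul (ih.mono Finset.subset_union_right)

lemma listProd_unitary (l : List (Gate q m)) :
    (l.map Gate.mat).prod ∈ Matrix.unitaryGroup (Fin m → Fin q) ℂ := by
  induction l with
  | nil => rw [List.map_nil, List.prod_nil]; exact one_mem _
  | cons g l ih => rw [List.map_cons, List.prod_cons]; exact mul_mem g.unitary ih

lemma pairwise_commute_map (l : List (Gate q m))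
    (hpw : l.Pairwise (fun g h => Disjoint g.supp h.supp)) :
    (l.map Gate.mat).Pairwise Commute := by
  refine List.Pairwise.map _ (fun g h hd => ?_) hpw
  exact commute_of_disjoint g.isLocal h.isLocal hd

/-- Conjugating an operator supported on `T` by a layer of gates with pairwise disjoint
supports only involves the gates whose support meets `T`. -/
lemma layer_conj {l : List (Gate q m)} (hpw : l.Pairwise (fun g h => Disjoint g.supp h.supp))
    {A : Matrix (Fin m → Fin q) (Fin m → Fin q) ℂ} {T : Finset (Fin m)} (hA : ActsOn q A T) :
    ActsOn q (((l.map Gate.mat).prod)ᴴ * A * (l.map Gate.mat).prod)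
      (T ∪ listSupp (l.filter (fun g => decide (¬ Disjoint g.supp T)))) := by
  classical
  set p : Gate q m → Bool := fun g => decide (¬ Disjoint g.supp T) with hp
  set W : Matrix (Fin m → Fin q) (Fin m → Fin q) ℂ := ((l.filter p).map Gate.mat).prod with hW
  set V : Matrix (Fin m → Fin q) (Fin m → Fin q) ℂ :=
    ((l.filter (fun g => !(p g))).map Gate.mat).prod with hV
  have hmissT : ∀ g ∈ l.filter (fun g => !(p g)), Disjoint g.supp T := by
    intro g hg
    have := (List.mem_filter.mp hg).2
    simp only [hp, Bool.not_eq_true', decide_eq_false_iff_not, not_not] at this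
    exact this
  have hforall : ∀ g ∈ l, ∀ h ∈ l, g ≠ h → Disjoint g.supp h.supp := by
    have hs : Symmetric (fun g h : Gate q m => Disjoint g.supp h.supp) :=
      fun g h hd => Disjoint.symm hd
    haveI : Std.Symm (fun g h : Gate q m => Disjoint g.supp h.supp) := ⟨fun a b h => hs h⟩
    exact fun g hg h hh hne => hpw.forall hg hh hne
  have hmissW : Disjoint (listSupp (l.filter (fun g => !(p g))))
      (listSupp (l.filter p)) := by
    rw [Finset.disjoint_left]
    intro i hi hi'
    obtain ⟨g, hg, hig⟩ := mem_listSupp.mp hi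
    obtain ⟨h, hh, hih⟩ := mem_listSupp.mp hi'
    have hgl := (List.mem_filter.mp hg).1
    have hhl := (List.mem_filter.mp hh).1
    by_cases hgh : g = h
    · subst hgh
      have h1 := (List.mem_filter.mp hg).2
      have h2 := (List.mem_filter.mp hh).2
      rw [h2] at h1; simp at h1
    · exact Finset.disjoint_left.mp (hforall g hgl h hhl hgh) hig hih
  have hL : (l.map Gate.mat).prod = W * V := by
    rw [hW, hV, ← List.prod_append, ← List.map_append]
    refine (List.Perm.prod_eq' ?_ ?_).symm
    · exact (List.filter_append_perm p l).map Gate.mat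
    · refine pairwise_commute_map _ ?_
      refine ((List.filter_append_perm p l).pairwise_iff ?_).mpr hpw
      exact fun {g h} hd => Disjoint.symm hd
  have hWAW : ActsOn q (Wᴴ * A * W) (T ∪ listSupp (l.filter p)) :=
    (((actsOn_listProd _).conjTranspose.mono Finset.subset_union_right).mul
      (hA.mono Finset.subset_union_left)).mul
      ((actsOn_listProd _).mono Finset.subset_union_right)
  have hVdisj : Disjoint (listSupp (l.filter (fun g => !(p g))))
      (T ∪ listSupp (l.filter p)) := by
    rw [Finset.disjoint_union_right]
    exact ⟨disjoint_listSupp hmissT, hmissW⟩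
  have hVA : ActsOn q Vᴴ (listSupp (l.filter (fun g => !(p g)))) :=
    (actsOn_listProd _).conjTranspose
  have hVV : Vᴴ * V = 1 := by
    have := (Unitary.mem_iff.mp (listProd_unitary (l.filter (fun g => !(p g))))).1
    rwa [Matrix.star_eq_conjTranspose] at this
  have key : ((l.map Gate.mat).prod)ᴴ * A * (l.map Gate.mat).prod = Wᴴ * A * W := by
    rw [hL, Matrix.conjTranspose_mul]
    calc Vᴴ * Wᴴ * A * (W * V) = Vᴴ * (Wᴴ * A * W) * V := by
          simp only [mul_assoc]
      _ = (Wᴴ * A * W) * Vᴴ * V := by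
          rw [commute_of_disjoint hVA hWAW hVdisj, mul_assoc]
      _ = Wᴴ * A * W := by rw [mul_assoc, hVV, mul_one]
  rw [key]
  exact hWAW

end ListLemmas
section CircuitLemmas

variable {q m d : ℕ}

/-- The product of the top `k` layers: `L_{d-1} ⋯ L_{d-k}`. -/
def topProd (C : Circuit q m d) : ℕ → Matrix (Fin m → Fin q) (Fin m → Fin q) ℂ
  | 0 => 1
  | k + 1 => topProd C k * ((layerGet C (d - 1 - k)).map Gate.mat).prod

lemma layerGet_pairwise (C : Circuit q m d) (j : ℕ) :
    (layerGet C j).Pairwise (fun g h => Disjoint g.supp h.supp) := by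
  unfold layerGet
  split
  · exact C.disjoint _
  · exact List.Pairwise.nil

lemma topProd_unitary (C : Circuit q m d) (k : ℕ) :
    topProd C k ∈ Matrix.unitaryGroup (Fin m → Fin q) ℂ := by
  induction k with
  | zero => exact one_mem _
  | succ k ih => exact mul_mem ih (listProd_unitary _)

lemma circuitU_eq_topProd (C : Circuit q m d) : circuitU C = topProd C d := by
  have key : ∀ k, k ≤ d →
      (((List.ofFn fun j : Fin d => layerU C j).reverse).take k).prod = topProd C k := by
    intro k
    induction k with
    | zero => intro _; simp [topProd]
    | succ k ih =>
        intro hk1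
        have hk : k < d := hk1
        have hlen : ((List.ofFn fun j : Fin d => layerU C j).reverse).length = d := by
          simp
        have hget : ((List.ofFn fun j : Fin d => layerU C j).reverse)[k]'(by omega)
            = ((layerGet C (d - 1 - k)).map Gate.mat).prod := by
          rw [List.getElem_reverse]
          rw [List.getElem_ofFn]
          have hlt : d - 1 - k < d := by omega
          simp only [List.length_ofFn]
          show layerU C ⟨d - 1 - k, hlt⟩ = _
          unfold layerU layerGet
          rw [dif_pos hlt]
        rw [List.take_succ, List.prod_append, ih (by omega)]
        rw [List.getElem?_eq_getElem (by omega : k < ((List.ofFn fun j : Fin d => layerU C j).reverse).length)]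
        rw [hget]
        simp [topProd]
  have := key d le_rfl
  rw [List.take_of_length_le (by simp)] at this
  exact this

lemma lcAux_succ (C : Circuit q m d) (S : Finset (Fin m)) (k : ℕ) :
    lcAux C S (k + 1) = lcAux C S k ∪
      listSupp ((layerGet C (d - 1 - k)).filter
        (fun g => decide (¬ Disjoint g.supp (lcAux C S k)))) := rfl

lemma actsOn_topProd_conj (C : Circuit q m d) {S : Finset (Fin m)}
    {A : Matrix (Fin m → Fin q) (Fin m → Fin q) ℂ} (hA : ActsOn q A S) (k : ℕ) :
    ActsOn q ((topProd C k)ᴴ * A * topProd C k) (lcAux C S k) := by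
  induction k with
  | zero =>
      show ActsOn q ((1 : Matrix _ _ ℂ)ᴴ * A * 1) S
      rw [Matrix.conjTranspose_one, one_mul, mul_one]
      exact hA
  | succ k ih =>
      have key := layer_conj (layerGet_pairwise C (d - 1 - k)) ih
      rw [← lcAux_succ] at key
      have e : (topProd C (k + 1))ᴴ * A * topProd C (k + 1)
          = (((layerGet C (d - 1 - k)).map Gate.mat).prod)ᴴ *
              ((topProd C k)ᴴ * A * topProd C k) *
              ((layerGet C (d - 1 - k)).map Gate.mat).prod := by
        show (topProd C k * _)ᴴ * A * (topProd C k * _) = _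
        rw [Matrix.conjTranspose_mul]
        simp only [mul_assoc]
      rw [e]
      exact key

lemma lcAux_disjoint (C : Circuit q m d) {SA SB : Finset (Fin m)} (hAB : Disjoint SA SB)
    (hlc : ∀ j : ℕ, ∀ g ∈ lightcone C SA j, g ∉ lightcone C SB j) :
    ∀ k, k ≤ d → Disjoint (lcAux C SA k) (lcAux C SB k) := by
  intro k
  induction k with
  | zero => intro _; exact hAB
  | succ k ih =>
      intro hk1
      have hk : k ≤ d - 1 := by omega
      have hj : d - 1 - (d - 1 - k) = k := Nat.sub_sub_self hk
      have ihd : Disjoint (lcAux C SA k) (lcAux C SB k) := ih (by omega)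
      have hlcA : lightcone C SA (d - 1 - k) = (layerGet C (d - 1 - k)).filter
          (fun g => decide (¬ Disjoint g.supp (lcAux C SA k))) := by
        unfold lightcone; rw [hj]
      have hlcB : lightcone C SB (d - 1 - k) = (layerGet C (d - 1 - k)).filter
          (fun g => decide (¬ Disjoint g.supp (lcAux C SB k))) := by
        unfold lightcone; rw [hj]
      rw [Finset.disjoint_left]
      intro i hiA hiB
      rw [lcAux_succ, Finset.mem_union] at hiA hiB
      have hforall : ∀ g ∈ layerGet C (d - 1 - k), ∀ h ∈ layerGet C (d - 1 - k),
          g ≠ h → Disjoint g.supp h.supp := by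
        have hs : Symmetric (fun g h : Gate q m => Disjoint g.supp h.supp) :=
          fun {g h} hd => Disjoint.symm hd
        haveI : Std.Symm (fun g h : Gate q m => Disjoint g.supp h.supp) := ⟨fun a b h => hs h⟩
        exact fun g hg h hh hne => (layerGet_pairwise C (d - 1 - k)).forall hg hh hne
      rcases hiA with hiA | hiA
      · rcases hiB with hiB | hiB
        · exact Finset.disjoint_left.mp ihd hiA hiB
        · obtain ⟨h, hh, hih⟩ := mem_listSupp.mp hiB
          have hhl := (List.mem_filter.mp hh).1
          have hhA : h ∈ lightcone C SA (d - 1 - k) := by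
            rw [hlcA]
            refine List.mem_filter.mpr ⟨hhl, decide_eq_true ?_⟩
            intro hd; exact Finset.disjoint_left.mp hd hih hiA
          have hhB : h ∈ lightcone C SB (d - 1 - k) := by rw [hlcB]; exact hh
          exact hlc _ h hhA hhB
      · obtain ⟨g, hg, hig⟩ := mem_listSupp.mp hiA
        have hgl := (List.mem_filter.mp hg).1
        have hgA : g ∈ lightcone C SA (d - 1 - k) := by rw [hlcA]; exact hg
        rcases hiB with hiB | hiB
        · have hgB : g ∈ lightcone C SB (d - 1 - k) := by
            rw [hlcB]
            refine List.mem_filter.mpr ⟨hgl, decide_eq_true ?_⟩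
            intro hd; exact Finset.disjoint_left.mp hd hig hiB
          exact hlc _ g hgA hgB
        · obtain ⟨h, hh, hih⟩ := mem_listSupp.mp hiB
          have hhl := (List.mem_filter.mp hh).1
          by_cases hgh : g = h
          · subst hgh
            have hgB : g ∈ lightcone C SB (d - 1 - k) := by rw [hlcB]; exact hh
            exact hlc _ g hgA hgB
          · exact Finset.disjoint_left.mp (hforall g hgl h hhl hgh) hig hih

end CircuitLemmas
section TraceLemmas

lemma trace_mul_expand {n : Type} [Fintype n] [DecidableEq n] (P Q : Matrix n n ℂ) :
    (P * Q).trace = ∑ x, ∑ y, P x y * Q y x := by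
  simp [Matrix.trace, Matrix.diag, Matrix.mul_apply]

lemma trace_mul_zeroState {q m : ℕ} (hq : 0 < q)
    (M : Matrix (Fin m → Fin q) (Fin m → Fin q) ℂ) :
    (M * zeroState q m hq).trace = M (fun _ => ⟨0, hq⟩) (fun _ => ⟨0, hq⟩) := by
  rw [trace_mul_expand]
  have h1 : ∀ x : Fin m → Fin q,
      (∑ y, M x y * zeroState q m hq y x)
        = M x (fun _ => ⟨0, hq⟩) * star (if x = (fun _ => (⟨0, hq⟩ : Fin q)) then (1 : ℂ) else 0) := by
    intro x
    simp only [zeroState, outer]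
    rw [Fintype.sum_eq_single (fun _ => (⟨0, hq⟩ : Fin q))]
    · rw [if_pos rfl, one_mul]
    · intro y hy
      rw [if_neg hy, zero_mul, mul_zero]
  simp only [h1]
  rw [Fintype.sum_eq_single (fun _ => (⟨0, hq⟩ : Fin q))]
  · rw [if_pos rfl, star_one, mul_one]
  · intro x hx; rw [if_neg hx, star_zero, mul_zero]

lemma trace_compress_ptrace {ι : Type} [Fintype ι] [DecidableEq ι] {q : ℕ} (hq : 0 < q)
    {Y S : Finset ι} {A : Matrix (ι → Fin q) (ι → Fin q) ℂ}
    (M : Matrix (ι → Fin q) (ι → Fin q) ℂ)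
    (hA : ActsOn q A S) (hSY : Disjoint S Y) :
    (compress hq Y A * ptrace q Y M).trace = (A * M).trace := by
  obtain ⟨N, hN⟩ := hA
  have hA0 : ∀ (zu zv : {i : ι // i ∈ Y} → Fin q) (xu xv : {i : ι // i ∉ Y} → Fin q),
      A (glue Y zu xu) (glue Y zv xv)
        = if zu = zv then compress hq Y A xu xv else 0 := by
    intro zu zv xu xv
    by_cases hz : zu = zv
    · subst hz
      rw [if_pos rfl]
      simp only [compress, hN]
      have hcond : (∀ i ∉ S, glue Y zu xu i = glue Y zu xv i)
          ↔ (∀ i ∉ S, (if h : i ∈ Y then (⟨0, hq⟩ : Fin q) else xu ⟨i, h⟩)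
              = (if h : i ∈ Y then (⟨0, hq⟩ : Fin q) else xv ⟨i, h⟩)) := by
        constructor
        · intro hc i hi
          by_cases hiY : i ∈ Y
          · simp only [dif_pos hiY]
          · simp only [dif_neg hiY]
            have := hc i hi
            rwa [glue_not_mem hiY, glue_not_mem hiY] at this
        · intro hc i hi
          by_cases hiY : i ∈ Y
          · rw [glue_mem hiY, glue_mem hiY]
          · rw [glue_not_mem hiY, glue_not_mem hiY]
            have := hc i hi
            simpa only [dif_neg hiY] using this
      have e1 : (fun i : {i : ι // i ∈ S} => glue Y zu xu i.1)
          = fun i : {i : ι // i ∈ S} =>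
              if h : i.1 ∈ Y then (⟨0, hq⟩ : Fin q) else xu ⟨i.1, h⟩ := by
        funext i
        have hiY : i.1 ∉ Y := Finset.disjoint_left.mp hSY i.2
        rw [dif_neg hiY, glue_not_mem hiY]
      have e2 : (fun i : {i : ι // i ∈ S} => glue Y zu xv i.1)
          = fun i : {i : ι // i ∈ S} =>
              if h : i.1 ∈ Y then (⟨0, hq⟩ : Fin q) else xv ⟨i.1, h⟩ := by
        funext i
        have hiY : i.1 ∉ Y := Finset.disjoint_left.mp hSY i.2
        rw [dif_neg hiY, glue_not_mem hiY]
      exact if_congr hcond (by rw [e1, e2]) rfl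
    · rw [if_neg hz, hN, if_neg]
      intro hc
      apply hz
      funext j
      have hjS : j.1 ∉ S := Finset.disjoint_right.mp hSY j.2
      have := hc j.1 hjS
      rwa [glue_mem j.2, glue_mem j.2] at this
  rw [trace_mul_expand, trace_mul_expand]
  rw [sum_split Y (fun u => ∑ v, A u v * M v u)]
  have inner : ∀ (zu : {i : ι // i ∈ Y} → Fin q) (xu : {i : ι // i ∉ Y} → Fin q),
      (∑ v, A (glue Y zu xu) v * M v (glue Y zu xu))
        = ∑ xv, compress hq Y A xu xv * M (glue Y zu xv) (glue Y zu xu) := by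
    intro zu xu
    rw [sum_split Y (fun v => A (glue Y zu xu) v * M v (glue Y zu xu))]
    rw [Fintype.sum_eq_single zu]
    · exact Finset.sum_congr rfl (fun xv _ => by rw [hA0, if_pos rfl])
    · intro zv hzv
      refine Finset.sum_eq_zero (fun xv _ => ?_)
      rw [hA0, if_neg (Ne.symm hzv), zero_mul]
  calc ∑ x, ∑ y, compress hq Y A x y * ptrace q Y M y x
      = ∑ xu, ∑ xv, ∑ zu, compress hq Y A xu xv * M (glue Y zu xv) (glue Y zu xu) := by
        refine Finset.sum_congr rfl (fun xu _ => Finset.sum_congr rfl (fun xv _ => ?_))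
        rw [← Finset.mul_sum]
        rfl
    _ = ∑ xu, ∑ zu, ∑ xv, compress hq Y A xu xv * M (glue Y zu xv) (glue Y zu xu) := by
        exact Finset.sum_congr rfl (fun xu _ => Finset.sum_comm)
    _ = ∑ zu, ∑ xu, ∑ xv, compress hq Y A xu xv * M (glue Y zu xv) (glue Y zu xu) :=
        Finset.sum_comm
    _ = ∑ zu, ∑ xu, ∑ v, A (glue Y zu xu) v * M v (glue Y zu xu) := by
        exact Finset.sum_congr rfl (fun zu _ => Finset.sum_congr rfl (fun xu _ =>
          (inner zu xu).symm))

end TraceLemmas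

/-- if `ρ = Tr_Y(U|0⟩⟨0|^{⊗m}U†)` for a depth-`d` circuit `U`, and `A`, `B`
act on disjoint sets of qudits (both disjoint from `Y`) with disjoint lightcones, then
`Tr((A ⊗ B)ρ) = Tr(Aρ)·Tr(Bρ)` (here `A ⊗ B = A * B`, with operators extended by the
identity, and restricted to the qudits outside `Y` via `compress`). -/
theorem lightcone_factorization (q m d : ℕ) (hq : 0 < q) (C : Circuit q m d)
    (Y SA SB : Finset (Fin m))
    (A B : Matrix (Fin m → Fin q) (Fin m → Fin q) ℂ)
    (hA : ActsOn q A SA) (hB : ActsOn q B SB)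
    (hAB : Disjoint SA SB) (hAY : Disjoint SA Y) (hBY : Disjoint SB Y)
    (hlc : ∀ j : ℕ, ∀ g ∈ lightcone C SA j, g ∉ lightcone C SB j)
    (ρ : Matrix ({i : Fin m // i ∉ Y} → Fin q) ({i : Fin m // i ∉ Y} → Fin q) ℂ)
    (hρ : ρ = ptrace q Y (circuitU C * zeroState q m hq * (circuitU C)ᴴ)) :
    (compress hq Y (A * B) * ρ).trace =
      (compress hq Y A * ρ).trace * (compress hq Y B * ρ).trace := by
  subst hρ
  set U := circuitU C with hU
  have hUu : U ∈ Matrix.unitaryGroup (Fin m → Fin q) ℂ := by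
    rw [hU, circuitU_eq_topProd]; exact topProd_unitary C d
  have hUU : U * Uᴴ = 1 := by
    have := (Unitary.mem_iff.mp hUu).2
    rwa [Matrix.star_eq_conjTranspose] at this
  have hconjA : ActsOn q (Uᴴ * A * U) (lcAux C SA d) := by
    rw [hU, circuitU_eq_topProd]; exact actsOn_topProd_conj C hA d
  have hconjB : ActsOn q (Uᴴ * B * U) (lcAux C SB d) := by
    rw [hU, circuitU_eq_topProd]; exact actsOn_topProd_conj C hB d
  have hdisj : Disjoint (lcAux C SA d) (lcAux C SB d) := lcAux_disjoint C hAB hlc d le_rfl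
  have key : ∀ (X : Matrix (Fin m → Fin q) (Fin m → Fin q) ℂ) (SX : Finset (Fin m)),
      ActsOn q X SX → Disjoint SX Y →
      (compress hq Y X * ptrace q Y (U * zeroState q m hq * Uᴴ)).trace
        = (Uᴴ * X * U) (fun _ => ⟨0, hq⟩) (fun _ => ⟨0, hq⟩) := by
    intro X SX hX hXY
    rw [trace_compress_ptrace hq _ hX hXY]
    have h1 : X * (U * zeroState q m hq * Uᴴ) = X * U * zeroState q m hq * Uᴴ := by
      simp only [mul_assoc]
    rw [h1, Matrix.trace_mul_comm, ← mul_assoc, ← mul_assoc, trace_mul_zeroState]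
  have hABact : ActsOn q (A * B) (SA ∪ SB) :=
    (hA.mono Finset.subset_union_left).mul (hB.mono Finset.subset_union_right)
  have hABY : Disjoint (SA ∪ SB) Y := Finset.disjoint_union_left.mpr ⟨hAY, hBY⟩
  have split : Uᴴ * (A * B) * U = (Uᴴ * A * U) * (Uᴴ * B * U) := by
    have h1 : (Uᴴ * A * U) * (Uᴴ * B * U) = Uᴴ * A * (U * Uᴴ) * B * U := by
      simp only [mul_assoc]
    rw [h1, hUU, mul_one]
    simp only [mul_assoc]
  rw [key (A * B) (SA ∪ SB) hABact hABY, key A SA hA hAY, key B SB hB hBY, split,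
    mul_apply_diag_of_disjoint hconjA hconjB hdisj]
end QCircuit
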